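/- Let K ⊆ ℝⁿ be closed convex, U an affine subspace with K ∩ U ≠ ∅, and S a separating operator for K. The MAAP sequence x^{k+1} = T^S(x^k) = P_U(P^S(x^k)), from any x⁰ ∈ ℝⁿ, is Fejér monotone with respect to K ∩ U and converges to a point of K ∩ U. -/

import Mathlib

open Filter Topology
open scoped RealInnerProductSpace

lemma proj_ineq_aux {E : Type*} [NormedAddCommGroup E] [InnerProductSpace ℝ E]
    {C : Set E} (hC : Convex ℝ C) {z v : E} (hv : v ∈ C)
    (hmin : ∀ w ∈ C, dist z v ≤ dist z w) :
    ∀ y ∈ C, ‖v - y‖ ^ 2 + ‖z - v‖ ^ 2 ≤ ‖z - y‖ ^ 2 := by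
  have hinner : ∀ w ∈ C, ⟪z - v, w - v⟫ ≤ 0 := by
    haveI : Nonempty C := ⟨⟨v, hv⟩⟩
    rw [← norm_eq_iInf_iff_real_inner_le_zero hC hv]
    refine le_antisymm (le_ciInf fun w => ?_) (ciInf_le (f := fun w : C => ‖z - (w : E)‖) ⟨0, ?_⟩ ⟨v, hv⟩)
    · simpa [dist_eq_norm] using hmin w w.2
    · rintro r ⟨w, rfl⟩; positivity
  intro y hy
  have h := hinner y hy
  have hz : z - y = (z - v) + (v - y) := by abel
  have hexp : ‖z - y‖ ^ 2 = ‖z - v‖ ^ 2 + 2 * ⟪z - v, v - y⟫ + ‖v - y‖ ^ 2 := by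
    rw [hz]; exact norm_add_sq_real _ _
  have hneg : ⟪z - v, v - y⟫ = -⟪z - v, y - v⟫ := by
    rw [show v - y = -(y - v) from by abel, inner_neg_right]
  linarith [hexp, hneg, h]

theorem stmt_11 {n : ℕ} (K U : Set (EuclideanSpace ℝ (Fin n)))
    (hKcl : IsClosed K) (hKcv : Convex ℝ K)
    (hU : ∃ (Q : EuclideanSpace ℝ (Fin n) →ₗ[ℝ] EuclideanSpace ℝ (Fin n))
      (b : EuclideanSpace ℝ (Fin n)), U = {x | Q x = b})
    (hKU : (K ∩ U).Nonempty)
    (S : EuclideanSpace ℝ (Fin n) → Set (EuclideanSpace ℝ (Fin n)))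
    (hA1 : ∀ x, IsClosed (S x) ∧ Convex ℝ (S x))
    (hA2 : ∀ x, K ⊆ S x)
    (hA3 : ∀ (z : ℕ → EuclideanSpace ℝ (Fin n)) (zstar : EuclideanSpace ℝ (Fin n)),
      Tendsto z atTop (𝓝 zstar) →
      Tendsto (fun k => Metric.infDist (z k) (S (z k))) atTop (𝓝 0) → zstar ∈ K)
    (PS PU : EuclideanSpace ℝ (Fin n) → EuclideanSpace ℝ (Fin n))
    (hPS : ∀ y, PS y ∈ S y ∧ ∀ w ∈ S y, dist y (PS y) ≤ dist y w)
    (hPU : ∀ y, PU y ∈ U ∧ ∀ w ∈ U, dist y (PU y) ≤ dist y w)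
    (x : ℕ → EuclideanSpace ℝ (Fin n))
    (hxk : ∀ k, x (k + 1) = PU (PS (x k))) :
    (∀ k, ∀ y ∈ K ∩ U, dist (x (k + 1)) y ≤ dist (x k) y) ∧
    (∃ xstar ∈ K ∩ U, Tendsto x atTop (𝓝 xstar)) := by
  obtain ⟨Q, b, hUdef⟩ := hU
  have hUcv : Convex ℝ U := by
    rw [hUdef]
    intro p hp q hq a c ha hc hac
    simp only [Set.mem_setOf_eq] at *
    simp [map_add, map_smul, hp, hq, ← add_smul, hac]
  have hUcl : IsClosed U := by
    rw [hUdef]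
    exact IsClosed.preimage (Q.continuous_of_finiteDimensional) isClosed_singleton
  set e : ℕ → EuclideanSpace ℝ (Fin n) := fun k => PS (x k) with he
  have key1 : ∀ k, ∀ y ∈ K, ‖e k - y‖ ^ 2 + ‖x k - e k‖ ^ 2 ≤ ‖x k - y‖ ^ 2 := fun k y hy =>
    proj_ineq_aux (hA1 (x k)).2 (hPS (x k)).1 (hPS (x k)).2 y (hA2 (x k) hy)
  have key2 : ∀ k, ∀ y ∈ U, ‖x (k+1) - y‖ ^ 2 + ‖e k - x (k+1)‖ ^ 2 ≤ ‖e k - y‖ ^ 2 := by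
    intro k y hy
    rw [hxk k]
    exact proj_ineq_aux hUcv (hPU (e k)).1 (hPU (e k)).2 y hy
  have fejer : ∀ k, ∀ y ∈ K ∩ U, dist (x (k + 1)) y ≤ dist (x k) y := by
    intro k y hy
    have h1 := key1 k y hy.1
    have h2 := key2 k y hy.2
    rw [dist_eq_norm, dist_eq_norm]
    have hsq : ‖x (k+1) - y‖ ^ 2 ≤ ‖x k - y‖ ^ 2 := by
      nlinarith [sq_nonneg ‖x k - e k‖, sq_nonneg ‖e k - x (k+1)‖]
    nlinarith [norm_nonneg (x (k+1) - y), norm_nonneg (x k - y)]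
  obtain ⟨y₀, hy₀⟩ := hKU
  have hanti : ∀ y ∈ K ∩ U, Antitone fun k => dist (x k) y := fun y hy =>
    antitone_nat_of_succ_le fun k => fejer k y hy
  set d : ℕ → ℝ := fun k => ‖x k - y₀‖ ^ 2 with hd
  have hdanti : Antitone d := by
    intro i j hij
    have := hanti y₀ hy₀ hij
    simp only [dist_eq_norm] at this
    exact pow_le_pow_left₀ (norm_nonneg _) this 2
  have hdbdd : BddBelow (Set.range d) := ⟨0, by rintro r ⟨k, rfl⟩; positivity⟩
  have hdlim : Tendsto d atTop (𝓝 (⨅ k, d k)) := tendsto_atTop_ciInf hdanti hdbdd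
  have hdiff : Tendsto (fun k => d k - d (k+1)) atTop (𝓝 0) := by
    have h2 : Tendsto (fun k => d (k+1)) atTop (𝓝 (⨅ k, d k)) :=
      hdlim.comp (tendsto_add_atTop_nat 1)
    simpa using hdlim.sub h2
  have hsqlim : Tendsto (fun k => ‖x k - e k‖ ^ 2) atTop (𝓝 0) := by
    refine squeeze_zero (fun k => by positivity) (fun k => ?_) hdiff
    have h1 := key1 k y₀ hy₀.1
    have h2 := key2 k y₀ hy₀.2
    simp only [hd]
    nlinarith [sq_nonneg ‖e k - x (k+1)‖]
  have hnorm : Tendsto (fun k => ‖x k - e k‖) atTop (𝓝 0) := by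
    have := hsqlim.sqrt
    simpa [Real.sqrt_sq (norm_nonneg _)] using this
  have hinf : Tendsto (fun k => Metric.infDist (x k) (S (x k))) atTop (𝓝 0) := by
    refine squeeze_zero (fun k => Metric.infDist_nonneg) (fun k => ?_) hnorm
    calc Metric.infDist (x k) (S (x k)) ≤ dist (x k) (e k) :=
          Metric.infDist_le_dist_of_mem (hPS (x k)).1
      _ = ‖x k - e k‖ := dist_eq_norm _ _
  have hball : ∀ k, x k ∈ Metric.closedBall y₀ (dist (x 0) y₀) := by
    intro k
    rw [Metric.mem_closedBall]
    exact hanti y₀ hy₀ (Nat.zero_le k)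
  obtain ⟨xstar, _, φ, hφmono, hφtend⟩ :=
    (isCompact_closedBall y₀ (dist (x 0) y₀)).tendsto_subseq hball
  have hxstarK : xstar ∈ K := by
    refine hA3 (x ∘ φ) xstar hφtend ?_
    have := hinf.comp hφmono.tendsto_atTop
    exact this
  have hxstarU : xstar ∈ U := by
    refine hUcl.mem_of_tendsto hφtend ?_
    filter_upwards [eventually_ge_atTop 1] with j hj
    have h1 : 1 ≤ φ j := le_trans hj hφmono.le_apply
    have : x (φ j) ∈ U := by
      rw [show φ j = (φ j - 1) + 1 from by omega, hxk]
      exact (hPU _).1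
    exact this
  have hantix : Antitone fun k => dist (x k) xstar :=
    antitone_nat_of_succ_le fun k => fejer k xstar ⟨hxstarK, hxstarU⟩
  have hbddx : BddBelow (Set.range fun k => dist (x k) xstar) :=
    ⟨0, by rintro r ⟨k, rfl⟩; exact dist_nonneg⟩
  have hlim : Tendsto (fun k => dist (x k) xstar) atTop (𝓝 (⨅ k, dist (x k) xstar)) :=
    tendsto_atTop_ciInf hantix hbddx
  have hsub : Tendsto (fun j => dist (x (φ j)) xstar) atTop (𝓝 0) := by
    have := tendsto_iff_dist_tendsto_zero.mp hφtend
    simpa [Function.comp] using this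
  have hsub2 : Tendsto (fun j => dist (x (φ j)) xstar) atTop
      (𝓝 (⨅ k, dist (x k) xstar)) := hlim.comp hφmono.tendsto_atTop
  have hinf0 : (⨅ k, dist (x k) xstar) = 0 := tendsto_nhds_unique hsub2 hsub
  rw [hinf0] at hlim
  exact ⟨fejer, xstar, ⟨hxstarK, hxstarU⟩, tendsto_iff_dist_tendsto_zero.mpr hlim⟩
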